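/- arXiv:1702.00477 — 2 statements merged into one kernel-verified Lean document; each statement's English description precedes it below -/
import Mathlib

section
/- Triangle-type inequality for the dominance move: for finite nonempty sets A, B, C ⊂ R^m, D(A,B) + D(B,C) ≥ D(A, B ∪ C), and also D(A,B) + D(A,C) ≥ D(A, B ∪ C). -/
open Finset

/-- A point in `ℝ^m`. -/
abbrev Pt (m : ℕ) := Fin m → ℝ

/-- `p` weakly dominates `q` (minimization): componentwise `≤`. -/
def wdom {m : ℕ} (p q : Pt m) : Prop := ∀ i, p i ≤ q i

/-- `p` dominates `q`: componentwise `≤` with at least one strict inequality. -/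
def sdom {m : ℕ} (p q : Pt m) : Prop := wdom p q ∧ ∃ i, p i < q i

/-- Set `P` weakly dominates set `Q`: every `q ∈ Q` is weakly dominated by some `p ∈ P`. -/
def setWDom {m : ℕ} (P Q : Finset (Pt m)) : Prop := ∀ q ∈ Q, ∃ p ∈ P, wdom p q

/-- L1 (Manhattan) distance between points. -/
noncomputable def l1 {m : ℕ} (p q : Pt m) : ℝ := ∑ j, |p j - q j|

/-- The dominance move `D(P,Q)`: the minimum total L1 move distance of points of `P`
(each `p` moved to `f p`) so that the moved set weakly dominates `Q`. -/
noncomputable def DoM {m : ℕ} (P Q : Finset (Pt m)) : ℝ :=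
  sInf { c | ∃ f : Pt m → Pt m, setWDom (P.image f) Q ∧ c = ∑ p ∈ P, l1 p (f p) }

/-- `d(p, S)`: the minimum L1 move of `p` needed to weakly dominate all of `S`,
namely `Σ_j (p^j − min({p^j} ∪ {s^j : s ∈ S}))`. -/
noncomputable def dCost {m : ℕ} (p : Pt m) (S : Finset (Pt m)) : ℝ :=
  ∑ j, (p j - (insert p S).inf' (insert_nonempty p S) (fun s => s j))

/-- `d(a, b)` between two points: `Σ_j (a^j − min(a^j, b^j))`. -/
noncomputable def dpt {m : ℕ} (a b : Pt m) : ℝ := ∑ j, (a j - min (a j) (b j))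

/-- `b` is an inward neighbor of `q` in `R`: `b ∈ R \ {q}` minimizes `d(·, q)`. -/
def isNb {m : ℕ} (R : Finset (Pt m)) (q b : Pt m) : Prop :=
  b ∈ R.erase q ∧ ∀ r ∈ R.erase q, dpt b q ≤ dpt r q

/-- The union of the point-sets of a list of groups. -/
noncomputable def unionSnd {m : ℕ} (S : List (Pt m × Finset (Pt m))) : Finset (Pt m) :=
  S.foldr (fun g acc => g.2 ∪ acc) ∅

/-- `S` is a partition of `P` to `Q`: each group is a point of `P` together with
a subset of `Q`, and the subsets cover `Q`. -/
def IsPartition {m : ℕ} (P Q : Finset (Pt m)) (S : List (Pt m × Finset (Pt m))) : Prop :=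
  (∀ g ∈ S, g.1 ∈ P ∧ g.2 ⊆ Q) ∧ unionSnd S = Q

/-- Total cost of a partition: the sum of the group costs `d(p_s, Q_s)`. -/
noncomputable def pcost {m : ℕ} (S : List (Pt m × Finset (Pt m))) : ℝ :=
  (S.map (fun g => dCost g.1 g.2)).sum

section Aux

/-- The set whose infimum is `DoM`. -/
def DSet {m : ℕ} (P Q : Finset (Pt m)) : Set ℝ :=
  { c | ∃ f : Pt m → Pt m, setWDom (P.image f) Q ∧ c = ∑ p ∈ P, l1 p (f p) }

lemma DoM_eq_sInf {m : ℕ} (P Q : Finset (Pt m)) : DoM P Q = sInf (DSet P Q) := rfl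

lemma l1_nonneg {m : ℕ} (p q : Pt m) : 0 ≤ l1 p q :=
  Finset.sum_nonneg fun j _ => abs_nonneg _

lemma DSet_bdd {m : ℕ} (P Q : Finset (Pt m)) : BddBelow (DSet P Q) := by
  refine ⟨0, fun c hc => ?_⟩
  obtain ⟨f, _, rfl⟩ := hc
  exact Finset.sum_nonneg fun p _ => l1_nonneg p (f p)

lemma DSet_nonempty {m : ℕ} (P Q : Finset (Pt m)) (hP : P.Nonempty) (hQ : Q.Nonempty) :
    (DSet P Q).Nonempty := by
  classical
  set q0 : Pt m := fun j => Q.inf' hQ (fun q => q j) with hq0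
  refine ⟨_, fun _ => q0, fun q hq => ⟨q0, ?_, fun j => Finset.inf'_le _ hq⟩, rfl⟩
  obtain ⟨p, hp⟩ := hP
  exact Finset.mem_image.2 ⟨p, hp, rfl⟩

/-- The combined move for `key1`. -/
noncomputable def hcomb {m : ℕ} (B : Finset (Pt m)) (f g σ : Pt m → Pt m) : Pt m → Pt m :=
  fun a j => (insert (f a) ((B.filter (fun b => σ b = a)).image g)).inf'
    (Finset.insert_nonempty _ _) (fun s => s j)

lemma hcomb_le_f {m : ℕ} (B : Finset (Pt m)) (f g σ : Pt m → Pt m) (a : Pt m) (j : Fin m) :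
    hcomb B f g σ a j ≤ f a j :=
  Finset.inf'_le _ (Finset.mem_insert_self _ _)

lemma hcomb_le_g {m : ℕ} (B : Finset (Pt m)) (f g σ : Pt m → Pt m) {a b : Pt m}
    (hb : b ∈ B) (hba : σ b = a) (j : Fin m) :
    hcomb B f g σ a j ≤ g b j := by
  classical
  have hm : g b ∈ insert (f a) ((B.filter (fun b => σ b = a)).image g) := by
    apply Finset.mem_insert_of_mem
    apply Finset.mem_image_of_mem
    exact Finset.mem_filter.2 ⟨hb, hba⟩
  exact Finset.inf'_le (fun s => s j) hm

lemma hcomb_attained {m : ℕ} (B : Finset (Pt m)) (f g σ : Pt m → Pt m) (a : Pt m) (j : Fin m) :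
    hcomb B f g σ a j = f a j ∨
      ∃ b ∈ B.filter (fun b => σ b = a), hcomb B f g σ a j = g b j := by
  classical
  obtain ⟨s, hs, hse⟩ := Finset.exists_mem_eq_inf'
    (Finset.insert_nonempty (f a) ((B.filter (fun b => σ b = a)).image g)) (fun s => s j)
  rcases Finset.mem_insert.1 hs with rfl | hs'
  · exact Or.inl hse
  · obtain ⟨b, hbf, rfl⟩ := Finset.mem_image.1 hs'
    exact Or.inr ⟨b, hbf, hse⟩

lemma key1 {m : ℕ} (A B C : Finset (Pt m)) (f g : Pt m → Pt m)
    (hf : setWDom (A.image f) B) (hg : setWDom (B.image g) C) :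
    ∃ h : Pt m → Pt m, setWDom (A.image h) (B ∪ C) ∧
      ∑ a ∈ A, l1 a (h a) ≤ (∑ a ∈ A, l1 a (f a)) + ∑ b ∈ B, l1 b (g b) := by
  classical
  have hσ' : ∀ b ∈ B, ∃ a ∈ A, wdom (f a) b := by
    intro b hb
    obtain ⟨p, hp, hpd⟩ := hf b hb
    obtain ⟨a, ha, rfl⟩ := Finset.mem_image.1 hp
    exact ⟨a, ha, hpd⟩
  choose! σ hσA hσd using hσ'
  refine ⟨hcomb B f g σ, ?_, ?_⟩
  · intro q hq
    rcases Finset.mem_union.1 hq with hqB | hqC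
    · refine ⟨hcomb B f g σ (σ q), Finset.mem_image.2 ⟨σ q, hσA q hqB, rfl⟩, fun j => ?_⟩
      exact le_trans (hcomb_le_f B f g σ (σ q) j) (hσd q hqB j)
    · obtain ⟨p, hp, hpd⟩ := hg q hqC
      obtain ⟨b, hb, rfl⟩ := Finset.mem_image.1 hp
      refine ⟨hcomb B f g σ (σ b), Finset.mem_image.2 ⟨σ b, hσA b hb, rfl⟩, fun j => ?_⟩
      exact le_trans (hcomb_le_g B f g σ hb rfl j) (hpd j)
  · have key : ∀ a ∈ A, l1 a (hcomb B f g σ a) ≤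
        l1 a (f a) + ∑ b ∈ B.filter (fun b => σ b = a), l1 b (g b) := by
      intro a _
      have hj : ∀ j, |a j - hcomb B f g σ a j| ≤
          |a j - f a j| + ∑ b ∈ B.filter (fun b => σ b = a), |b j - g b j| := by
        intro j
        rcases hcomb_attained B f g σ a j with heq | ⟨b, hbf, heq⟩
        · rw [heq]
          have : (0:ℝ) ≤ ∑ b ∈ B.filter (fun b => σ b = a), |b j - g b j| :=
            Finset.sum_nonneg fun b _ => abs_nonneg _
          linarith
        · obtain ⟨hbB, hba⟩ := Finset.mem_filter.1 hbf
          have h1 : |a j - hcomb B f g σ a j| ≤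
              |a j - f a j| + |f a j - hcomb B f g σ a j| := by
            have := abs_sub_le (a j) (f a j) (hcomb B f g σ a j); linarith [this]
          have h2 : |f a j - hcomb B f g σ a j| = f a j - hcomb B f g σ a j :=
            abs_of_nonneg (by linarith [hcomb_le_f B f g σ a j])
          have h3 : f a j ≤ b j := by
            have := hσd b hbB j; rwa [hba] at this
          have h4 : f a j - hcomb B f g σ a j ≤ |b j - g b j| := by
            rw [heq]
            have : b j - g b j ≤ |b j - g b j| := le_abs_self _
            linarith
          have h5 : |b j - g b j| ≤ ∑ b' ∈ B.filter (fun b => σ b = a), |b' j - g b' j| :=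
            Finset.single_le_sum (f := fun b' => |b' j - g b' j|) (fun b' _ => abs_nonneg _) hbf
          linarith
      calc l1 a (hcomb B f g σ a) = ∑ j, |a j - hcomb B f g σ a j| := rfl
        _ ≤ ∑ j, (|a j - f a j| + ∑ b ∈ B.filter (fun b => σ b = a), |b j - g b j|) :=
            Finset.sum_le_sum fun j _ => hj j
        _ = l1 a (f a) + ∑ j, ∑ b ∈ B.filter (fun b => σ b = a), |b j - g b j| := by
            rw [Finset.sum_add_distrib]; rfl
        _ = l1 a (f a) + ∑ b ∈ B.filter (fun b => σ b = a), l1 b (g b) := by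
            rw [Finset.sum_comm]; rfl
    calc ∑ a ∈ A, l1 a (hcomb B f g σ a)
        ≤ ∑ a ∈ A, (l1 a (f a) + ∑ b ∈ B.filter (fun b => σ b = a), l1 b (g b)) :=
          Finset.sum_le_sum key
      _ = (∑ a ∈ A, l1 a (f a)) + ∑ a ∈ A, ∑ b ∈ B.filter (fun b => σ b = a), l1 b (g b) :=
          Finset.sum_add_distrib
      _ = (∑ a ∈ A, l1 a (f a)) + ∑ b ∈ B, l1 b (g b) := by
          rw [Finset.sum_fiberwise_of_maps_to hσA]

lemma key2 {m : ℕ} (A B C : Finset (Pt m)) (f g : Pt m → Pt m)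
    (hf : setWDom (A.image f) B) (hg : setWDom (A.image g) C) :
    ∃ h : Pt m → Pt m, setWDom (A.image h) (B ∪ C) ∧
      ∑ a ∈ A, l1 a (h a) ≤ (∑ a ∈ A, l1 a (f a)) + ∑ a ∈ A, l1 a (g a) := by
  classical
  refine ⟨fun a j => min (f a j) (g a j), ?_, ?_⟩
  · intro q hq
    rcases Finset.mem_union.1 hq with hqB | hqC
    · obtain ⟨p, hp, hpd⟩ := hf q hqB
      obtain ⟨a, ha, rfl⟩ := Finset.mem_image.1 hp
      exact ⟨_, Finset.mem_image.2 ⟨a, ha, rfl⟩,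
        fun j => le_trans (min_le_left _ _) (hpd j)⟩
    · obtain ⟨p, hp, hpd⟩ := hg q hqC
      obtain ⟨a, ha, rfl⟩ := Finset.mem_image.1 hp
      exact ⟨_, Finset.mem_image.2 ⟨a, ha, rfl⟩,
        fun j => le_trans (min_le_right _ _) (hpd j)⟩
  · rw [← Finset.sum_add_distrib]
    refine Finset.sum_le_sum fun a _ => ?_
    unfold l1
    rw [← Finset.sum_add_distrib]
    refine Finset.sum_le_sum fun j _ => ?_
    show |a j - min (f a j) (g a j)| ≤ |a j - f a j| + |a j - g a j|
    rcases le_total (f a j) (g a j) with hle | hle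
    · rw [min_eq_left hle]; linarith [abs_nonneg (a j - g a j)]
    · rw [min_eq_right hle]; linarith [abs_nonneg (a j - f a j)]

lemma combine {z : ℝ} (S1 S2 : Set ℝ) (h1 : S1.Nonempty) (h2 : S2.Nonempty)
    (H : ∀ x ∈ S1, ∀ y ∈ S2, z ≤ x + y) : z ≤ sInf S1 + sInf S2 := by
  rw [← sub_le_iff_le_add']
  refine le_csInf h2 fun y hy => ?_
  rw [sub_le_iff_le_add']
  rw [← sub_le_iff_le_add]
  refine le_csInf h1 fun x hx => ?_
  rw [sub_le_iff_le_add]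
  exact H x hx y hy

end Aux

theorem stmt5 {m : ℕ} (A B C : Finset (Pt m))
    (hA : A.Nonempty) (hB : B.Nonempty) (hC : C.Nonempty) :
    DoM A B + DoM B C ≥ DoM A (B ∪ C) ∧ DoM A B + DoM A C ≥ DoM A (B ∪ C) := by
  constructor
  · rw [ge_iff_le, DoM_eq_sInf A (B ∪ C), DoM_eq_sInf A B, DoM_eq_sInf B C]
    refine le_trans ?_ (combine _ _ (DSet_nonempty A B hA hB) (DSet_nonempty B C hB hC)
      (z := sInf (DSet A (B ∪ C))) ?_)
    · rfl
    · rintro x ⟨f, hf, rfl⟩ y ⟨g, hg, rfl⟩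
      obtain ⟨h, hdom, hcost⟩ := key1 A B C f g hf hg
      exact le_trans (csInf_le (DSet_bdd A (B ∪ C)) ⟨h, hdom, rfl⟩) hcost
  · rw [ge_iff_le, DoM_eq_sInf A (B ∪ C), DoM_eq_sInf A B, DoM_eq_sInf A C]
    refine le_trans ?_ (combine _ _ (DSet_nonempty A B hA hB) (DSet_nonempty A C hA hC)
      (z := sInf (DSet A (B ∪ C))) ?_)
    · rfl
    · rintro x ⟨f, hf, rfl⟩ y ⟨g, hg, rfl⟩
      obtain ⟨h, hdom, hcost⟩ := key2 A B C f g hf hg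
      exact le_trans (csInf_le (DSet_bdd A (B ∪ C)) ⟨h, hdom, rfl⟩) hcost
end

section
/- Between-points absorption: let S* be an optimal partition of P to Q with a group (p_s, Q_s), |Q_s| > 1, containing q_{s1}, q_{s2} ∈ Q_s. If a point q_t ∈ Q is weakly dominated by the ideal point of {q_{s1}, q_{s2}} (componentwise minimum), and q_t belongs to another group (p_t, Q_t) of S*, then moving q_t from Q_t to Q_s yields a partition with the same total cost; in particular, the new partition is also optimal. -/
open Finset

lemma unionSnd_append {m : ℕ} (L1 L2 : List (Pt m × Finset (Pt m))) :
    unionSnd (L1 ++ L2) = unionSnd L1 ∪ unionSnd L2 := by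
  induction L1 with
  | nil => simp [unionSnd]
  | cons a l ih =>
    show a.2 ∪ unionSnd (l ++ L2) = (a.2 ∪ unionSnd l) ∪ unionSnd L2
    rw [ih, Finset.union_assoc]

lemma unionSnd_cons {m : ℕ} (g : Pt m × Finset (Pt m)) (L : List (Pt m × Finset (Pt m))) :
    unionSnd (g :: L) = g.2 ∪ unionSnd L := rfl

lemma pcost_append {m : ℕ} (L1 L2 : List (Pt m × Finset (Pt m))) :
    pcost (L1 ++ L2) = pcost L1 + pcost L2 := by
  simp [pcost]

lemma pcost_cons {m : ℕ} (g : Pt m × Finset (Pt m)) (L : List (Pt m × Finset (Pt m))) :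
    pcost (g :: L) = dCost g.1 g.2 + pcost L := by
  simp [pcost]

lemma dCost_mono {m : ℕ} (p : Pt m) {S T : Finset (Pt m)} (h : S ⊆ T) :
    dCost p S ≤ dCost p T := by
  apply Finset.sum_le_sum
  intro j _
  have hsub : insert p S ⊆ insert p T := Finset.insert_subset_insert p h
  have : (insert p T).inf' (insert_nonempty p T) (fun s => s j)
      ≤ (insert p S).inf' (insert_nonempty p S) (fun s => s j) :=
    Finset.le_inf' _ _ (fun b hb => Finset.inf'_le _ (hsub hb))
  linarith

lemma dCost_insert_dominated {m : ℕ} (p qs1 qs2 qt : Pt m) {Qs : Finset (Pt m)}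
    (h1 : qs1 ∈ Qs) (h2 : qs2 ∈ Qs)
    (hdom : wdom (fun j => min (qs1 j) (qs2 j)) qt) :
    dCost p (insert qt Qs) = dCost p Qs := by
  unfold dCost
  apply Finset.sum_congr rfl
  intro j _
  congr 1
  have hset : insert p (insert qt Qs) = insert qt (insert p Qs) := by
    ext x; simp; tauto
  have hne : (insert p Qs).Nonempty := insert_nonempty p Qs
  have h1' : qs1 ∈ insert p Qs := Finset.mem_insert_of_mem h1
  have h2' : qs2 ∈ insert p Qs := Finset.mem_insert_of_mem h2
  have hle : (insert p Qs).inf' hne (fun s => s j) ≤ qt j := by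
    have := hdom j
    simp only at this
    rcases le_total (qs1 j) (qs2 j) with h | h
    · exact le_trans (Finset.inf'_le _ h1') (by rw [min_eq_left h] at this; exact this)
    · exact le_trans (Finset.inf'_le _ h2') (by rw [min_eq_right h] at this; exact this)
  apply le_antisymm
  · exact Finset.le_inf' _ _ (fun b hb => Finset.inf'_le _
      (Finset.insert_subset_insert p (Finset.subset_insert qt Qs) hb))
  · refine Finset.le_inf' _ _ (fun b hb => ?_)
    rcases Finset.mem_insert.mp (hset ▸ hb) with h | h
    · exact h ▸ hle
    · exact Finset.inf'_le _ h

theorem stmt12 {m : ℕ} (P Q : Finset (Pt m))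
    (A B C : List (Pt m × Finset (Pt m)))
    (ps pt : Pt m) (Qs Qt : Finset (Pt m))
    (hS : IsPartition P Q (A ++ (ps, Qs) :: B ++ (pt, Qt) :: C))
    (hopt : ∀ T, IsPartition P Q T →
      pcost (A ++ (ps, Qs) :: B ++ (pt, Qt) :: C) ≤ pcost T)
    (qs1 qs2 qt : Pt m) (h1 : qs1 ∈ Qs) (h2 : qs2 ∈ Qs) (hcard : 1 < Qs.card)
    (hqt : qt ∈ Qt)
    (hdom : wdom (fun j => min (qs1 j) (qs2 j)) qt) :
    IsPartition P Q (A ++ (ps, insert qt Qs) :: B ++ (pt, Qt.erase qt) :: C) ∧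
    pcost (A ++ (ps, insert qt Qs) :: B ++ (pt, Qt.erase qt) :: C)
      = pcost (A ++ (ps, Qs) :: B ++ (pt, Qt) :: C) ∧
    (∀ T, IsPartition P Q T →
      pcost (A ++ (ps, insert qt Qs) :: B ++ (pt, Qt.erase qt) :: C) ≤ pcost T) := by
  obtain ⟨hgrp, hcov⟩ := hS
  have hpsP : ps ∈ P ∧ Qs ⊆ Q := hgrp (ps, Qs) (by simp)
  have hptP : pt ∈ P ∧ Qt ⊆ Q := hgrp (pt, Qt) (by simp)
  have hqtQ : qt ∈ Q := hptP.2 hqt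
  have hpart : IsPartition P Q (A ++ (ps, insert qt Qs) :: B ++ (pt, Qt.erase qt) :: C) := by
    constructor
    · intro g hg
      rcases List.mem_append.mp hg with h | h
      · rcases List.mem_append.mp h with h | h
        · exact hgrp g (by simp [h])
        · rcases List.mem_cons.mp h with rfl | h
          · exact ⟨hpsP.1, Finset.insert_subset hqtQ hpsP.2⟩
          · exact hgrp g (by simp [h])
      · rcases List.mem_cons.mp h with rfl | h
        · exact ⟨hptP.1, (Finset.erase_subset _ _).trans hptP.2⟩
        · exact hgrp g (by simp [h])
    · rw [unionSnd_append, unionSnd_cons, unionSnd_append, unionSnd_cons] at hcov ⊢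
      rw [← hcov]
      ext x
      simp only [Finset.mem_union, Finset.mem_insert, Finset.mem_erase]
      by_cases hx : x = qt
      · subst hx; simp only [eq_self_iff_true, true_or, or_true, iff_true]; try tauto
      · simp [hx]; try tauto
  have hle : pcost (A ++ (ps, insert qt Qs) :: B ++ (pt, Qt.erase qt) :: C)
      ≤ pcost (A ++ (ps, Qs) :: B ++ (pt, Qt) :: C) := by
    rw [pcost_append, pcost_cons, pcost_append, pcost_cons,
        pcost_append, pcost_cons, pcost_append, pcost_cons]
    have e1 : dCost ps (insert qt Qs) = dCost ps Qs :=
      dCost_insert_dominated ps qs1 qs2 qt h1 h2 hdom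
    have e2 : dCost pt (Qt.erase qt) ≤ dCost pt Qt :=
      dCost_mono pt (Finset.erase_subset _ _)
    simp only [e1]
    linarith
  have hge := hopt _ hpart
  have heq : pcost (A ++ (ps, insert qt Qs) :: B ++ (pt, Qt.erase qt) :: C)
      = pcost (A ++ (ps, Qs) :: B ++ (pt, Qt) :: C) := le_antisymm hle hge
  exact ⟨hpart, heq, fun T hT => heq ▸ hopt T hT⟩
end
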